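/- Let 0 ≤ a ≤ m ≤ r with m > 0 and 1 − 2m/r + a²/r² > 0. Then r[ −(1 + a²/r² + 2ma²/r³)^{1/2}(1 − 2m/r + a²/r²)^{1/2} + (1 + (1 + a²/r² + 2ma²/r³)^{1/2})/2 ] > 0. -/

import Mathlib

open Real

lemma stmt_9_aux (u v : ℝ) (hu : 0 ≤ u) (huv : u ≤ v) (hv1 : v ≤ 1) (hv : 0 < v)
    (hD : 0 < 1 - 2*v + u^2) :
    (1 + u^2 + 2*v*u^2) * (1 - 2*v + u^2) < 1 := by
  have hu1 : u ≤ 1 := huv.trans hv1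
  have huv2 : u^2 ≤ v^2 := by nlinarith
  have h1 : 1 + u^2 + 2*v*u^2 ≤ 1 + u^2 + 2*v := by nlinarith
  have h2 : (1 + u^2 + 2*v) * (1 - 2*v + u^2) ≤ 1 - v^2 := by nlinarith [sq_nonneg v]
  have h3 : (1 + u^2 + 2*v*u^2) * (1 - 2*v + u^2) ≤ (1 + u^2 + 2*v) * (1 - 2*v + u^2) :=
    mul_le_mul_of_nonneg_right h1 hD.le
  nlinarith [mul_pos hv hv]

/-- key inequality showing K(π/2) > 0 for Kerr. -/
theorem stmt_9 (a m r : ℝ) (ha : 0 ≤ a) (ham : a ≤ m) (hmr : m ≤ r) (hm : 0 < m)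
    (hΔ : 0 < 1 - 2*m/r + a^2/r^2) :
    0 < r * (-(Real.sqrt (1 + a^2/r^2 + 2*m*a^2/r^3) * Real.sqrt (1 - 2*m/r + a^2/r^2))
        + (1 + Real.sqrt (1 + a^2/r^2 + 2*m*a^2/r^3)) / 2) := by
  have hr : 0 < r := lt_of_lt_of_le hm hmr
  set P := 1 + a^2/r^2 + 2*m*a^2/r^3 with hPdef
  set Δ := 1 - 2*m/r + a^2/r^2 with hDdef
  have hP0 : 0 ≤ P := by positivity
  have hP1 : 1 ≤ P := by
    rw [hPdef]
    have : (0:ℝ) ≤ a^2/r^2 + 2*m*a^2/r^3 := by positivity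
    linarith [this]
  have hs1 : 1 ≤ Real.sqrt P := by
    rw [show (1:ℝ) = Real.sqrt 1 by simp]
    exact Real.sqrt_le_sqrt hP1
  have e1 : P = 1 + (a/r)^2 + 2*(m/r)*(a/r)^2 := by
    rw [hPdef]; field_simp
  have e2 : Δ = 1 - 2*(m/r) + (a/r)^2 := by
    rw [hDdef]; field_simp
  have hkey : P * Δ < 1 := by
    rw [e1, e2]
    exact stmt_9_aux (a/r) (m/r) (by positivity) (by gcongr) ((div_le_one hr).mpr hmr)
      (by positivity) (by rw [← e2]; exact hΔ)
  have hst : Real.sqrt P * Real.sqrt Δ < 1 := by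
    rw [← Real.sqrt_mul hP0]
    have : Real.sqrt (P * Δ) < Real.sqrt 1 := by
      apply Real.sqrt_lt_sqrt (mul_nonneg hP0 (le_of_lt hΔ)) hkey
    simpa using this
  have : 0 < -(Real.sqrt P * Real.sqrt Δ) + (1 + Real.sqrt P) / 2 := by linarith
  exact mul_pos hr this
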